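/- For any proper and orthochronous Lorentz transformation A (a real 4×4 matrix), there exists a unique pair (v, O) with v ∈ ℝ³, |v| < 1, and O ∈ SO(3,ℝ), such that A = S(v)·R(O), where, with γ = 1/√(1 − |v|²), S(v) is the 4×4 block matrix with top-left 1×1 block γ, top-right 1×3 block γ·vᵀ, bottom-left 3×1 block γ·v, and bottom-right 3×3 block I₃ + (γ²/(1+γ))·v vᵀ, and R(O) is the 4×4 block matrix with top-left 1×1 block 1, zero off-diagonal blocks, and bottom-right 3×3 block O. -/

import Mathlib

/-- The Minkowski quadratic form on ℝ⁴: q(t,x,y,z) = x² + y² + z² − t². -/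
def mink (x : Fin 4 → ℝ) : ℝ := (x 1)^2 + (x 2)^2 + (x 3)^2 - (x 0)^2

/-- A real 4×4 matrix is a Lorentz transformation if it preserves the Minkowski form. -/
def IsLorentz (A : Matrix (Fin 4) (Fin 4) ℝ) : Prop :=
  ∀ x : Fin 4 → ℝ, mink (A.mulVec x) = mink x

/-- A Lorentz transformation is proper if its determinant is positive. -/
def IsProper (A : Matrix (Fin 4) (Fin 4) ℝ) : Prop := 0 < A.det

/-- A Lorentz transformation is orthochronous if it preserves the sign of the
time component of every timelike vector. -/
def IsOrthochronous (A : Matrix (Fin 4) (Fin 4) ℝ) : Prop :=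
  ∀ x : Fin 4 → ℝ, (x 1)^2 + (x 2)^2 + (x 3)^2 < (x 0)^2 →
    Real.sign (A.mulVec x 0) = Real.sign (x 0)

/-- Membership in SO(3,ℝ). -/
def SO3 (O : Matrix (Fin 3) (Fin 3) ℝ) : Prop := O.transpose * O = 1 ∧ O.det = 1

/-- Squared Euclidean norm of a vector in ℝ³. -/
def sq3 (v : Fin 3 → ℝ) : ℝ := (v 0)^2 + (v 1)^2 + (v 2)^2

/-- The Lorentz factor γ = 1/√(1 − |v|²). -/
noncomputable def gam (v : Fin 3 → ℝ) : ℝ := 1 / Real.sqrt (1 - sq3 v)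

/-- Build a 4×4 matrix from blocks of sizes 1 and 3. -/
def blk4 (a : Matrix (Fin 1) (Fin 1) ℝ) (b : Matrix (Fin 1) (Fin 3) ℝ)
    (c : Matrix (Fin 3) (Fin 1) ℝ) (d : Matrix (Fin 3) (Fin 3) ℝ) :
    Matrix (Fin 4) (Fin 4) ℝ :=
  Matrix.reindex finSumFinEquiv finSumFinEquiv (Matrix.fromBlocks a b c d)

/-- The boost matrix S(v), with γ = 1/√(1 − |v|²). -/
noncomputable def Smat (v : Fin 3 → ℝ) : Matrix (Fin 4) (Fin 4) ℝ :=
  blk4 (Matrix.of fun _ _ => gam v)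
       (Matrix.of fun _ j => gam v * v j)
       (Matrix.of fun i _ => gam v * v i)
       (1 + (gam v ^ 2 / (1 + gam v)) • Matrix.vecMulVec v v)

/-- The rotation matrix R(O). -/
def Rmat (O : Matrix (Fin 3) (Fin 3) ℝ) : Matrix (Fin 4) (Fin 4) ℝ :=
  blk4 1 0 0 O

/-! ### Auxiliary lemmas -/

/-- The Minkowski bilinear form. -/
def bil (x y : Fin 4 → ℝ) : ℝ := x 1 * y 1 + x 2 * y 2 + x 3 * y 3 - x 0 * y 0

lemma isLorentz_bil {A : Matrix (Fin 4) (Fin 4) ℝ} (hA : IsLorentz A) (x y : Fin 4 → ℝ) :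
    bil (A.mulVec x) (A.mulVec y) = bil x y := by
  have h1 := hA (x + y); have h2 := hA x; have h3 := hA y
  simp only [mink, Matrix.mulVec_add, Pi.add_apply] at h1 h2 h3
  unfold bil; ring_nf at h1 h2 h3 ⊢; linarith

lemma col_rel {A : Matrix (Fin 4) (Fin 4) ℝ} (hA : IsLorentz A) (i j : Fin 4) :
    A 1 i * A 1 j + A 2 i * A 2 j + A 3 i * A 3 j - A 0 i * A 0 j =
      (if i = j then (if i = 0 then -1 else 1) else 0) := by
  have h := isLorentz_bil hA (Pi.single i 1) (Pi.single j 1)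
  simp only [Matrix.mulVec_single_one, Matrix.col_apply, bil, mul_one] at h
  rw [h]
  fin_cases i <;> fin_cases j <;> simp [Pi.single_apply]

lemma blk4_apply (a : Matrix (Fin 1) (Fin 1) ℝ) (b : Matrix (Fin 1) (Fin 3) ℝ)
    (c : Matrix (Fin 3) (Fin 1) ℝ) (d : Matrix (Fin 3) (Fin 3) ℝ) :
    blk4 a b c d = Matrix.of
      ![![a 0 0, b 0 0, b 0 1, b 0 2],
        ![c 0 0, d 0 0, d 0 1, d 0 2],
        ![c 1 0, d 1 0, d 1 1, d 1 2],
        ![c 2 0, d 2 0, d 2 1, d 2 2]] := by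
  ext i j; fin_cases i <;> fin_cases j <;> rfl

lemma smat_apply (v : Fin 3 → ℝ) :
    Smat v = Matrix.of
      ![![gam v, gam v * v 0, gam v * v 1, gam v * v 2],
        ![gam v * v 0, 1 + gam v ^ 2 / (1 + gam v) * (v 0 * v 0), gam v ^ 2 / (1 + gam v) * (v 0 * v 1), gam v ^ 2 / (1 + gam v) * (v 0 * v 2)],
        ![gam v * v 1, gam v ^ 2 / (1 + gam v) * (v 1 * v 0), 1 + gam v ^ 2 / (1 + gam v) * (v 1 * v 1), gam v ^ 2 / (1 + gam v) * (v 1 * v 2)],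
        ![gam v * v 2, gam v ^ 2 / (1 + gam v) * (v 2 * v 0), gam v ^ 2 / (1 + gam v) * (v 2 * v 1), 1 + gam v ^ 2 / (1 + gam v) * (v 2 * v 2)]] := by
  rw [Smat, blk4_apply]
  simp [Matrix.vecMulVec_apply, Matrix.one_apply]

lemma rmat_apply (O : Matrix (Fin 3) (Fin 3) ℝ) :
    Rmat O = Matrix.of
      ![![1, 0, 0, 0],
        ![0, O 0 0, O 0 1, O 0 2],
        ![0, O 1 0, O 1 1, O 1 2],
        ![0, O 2 0, O 2 1, O 2 2]] := by
  rw [Rmat, blk4_apply]; simp [Matrix.one_apply]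

lemma rmat_injective {Q O : Matrix (Fin 3) (Fin 3) ℝ} (h : Rmat Q = Rmat O) : Q = O := by
  ext i j
  have := congrFun (congrFun h (finSumFinEquiv (Sum.inr i))) (finSumFinEquiv (Sum.inr j))
  simpa [Rmat, blk4, Matrix.reindex_apply, Matrix.submatrix_apply, Equiv.symm_apply_apply,
    Matrix.fromBlocks] using this

lemma sq3_nonneg (v : Fin 3 → ℝ) : 0 ≤ sq3 v := by unfold sq3; positivity

lemma gam_pos {v : Fin 3 → ℝ} (h : sq3 v < 1) : 0 < gam v := by
  unfold gam
  have : (0:ℝ) < Real.sqrt (1 - sq3 v) := Real.sqrt_pos.2 (by linarith)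
  positivity

lemma gam_sq {v : Fin 3 → ℝ} (h : sq3 v < 1) : gam v ^ 2 * (1 - sq3 v) = 1 := by
  unfold gam
  rw [div_pow, one_pow, Real.sq_sqrt (by linarith)]
  exact one_div_mul_cancel (by linarith)

lemma one_add_gam_ne {v : Fin 3 → ℝ} (h : sq3 v < 1) : (1 : ℝ) + gam v ≠ 0 := by
  have := gam_pos h; linarith

lemma gam_ks {v : Fin 3 → ℝ} (h : sq3 v < 1) :
    gam v ^ 2 / (1 + gam v) * sq3 v = gam v - 1 := by
  have h2 := one_add_gam_ne h
  field_simp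
  nlinarith [gam_sq h]

lemma gam_k1 {v : Fin 3 → ℝ} (h : sq3 v < 1) :
    gam v ^ 2 / (1 + gam v) * (1 + gam v) = gam v ^ 2 := by
  field_simp [one_add_gam_ne h]

lemma sq3_neg (v : Fin 3 → ℝ) : sq3 (fun i => -v i) = sq3 v := by unfold sq3; ring

lemma gam_neg (v : Fin 3 → ℝ) : gam (fun i => -v i) = gam v := by
  unfold gam; rw [sq3_neg]

lemma smat_isLorentz {v : Fin 3 → ℝ} (h : sq3 v < 1) : IsLorentz (Smat v) := by
  intro x
  have hg := gam_sq h; have hks := gam_ks h; have hk1 := gam_k1 h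
  unfold sq3 at hg hks
  rw [smat_apply]
  simp only [mink, Matrix.mulVec, dotProduct, Fin.sum_univ_four, Matrix.of_apply,
    Matrix.cons_val', Matrix.cons_val_zero, Matrix.cons_val_one, Matrix.head_cons,
    Matrix.empty_val', Matrix.cons_val_fin_one, Matrix.head_fin_const,
    Matrix.cons_val_two, Matrix.tail_cons, Matrix.cons_val_three]
  linear_combination (-(x 0 ^ 2)) * hg
    + (2 * gam v * x 0 * (v 0 * x 1 + v 1 * x 2 + v 2 * x 3)
       + gam v ^ 2 / (1 + gam v) * (v 0 * x 1 + v 1 * x 2 + v 2 * x 3) ^ 2) * hks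
    + (v 0 * x 1 + v 1 * x 2 + v 2 * x 3) ^ 2 * hk1

lemma smat_mul_smat_neg {v : Fin 3 → ℝ} (h : sq3 v < 1) :
    Smat v * Smat (fun i => -v i) = 1 := by
  have hg := gam_sq h; have hks := gam_ks h; have hk1 := gam_k1 h
  unfold sq3 at hg hks
  rw [smat_apply v, smat_apply (fun i => -v i), gam_neg]
  ext i j
  fin_cases i <;> fin_cases j <;>
    simp only [Matrix.mul_apply, Fin.sum_univ_four, Matrix.of_apply,
      Matrix.cons_val', Matrix.cons_val_zero, Matrix.cons_val_one, Matrix.head_cons,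
      Matrix.empty_val', Matrix.cons_val_fin_one, Matrix.head_fin_const,
      Matrix.cons_val_two, Matrix.tail_cons, Matrix.cons_val_three,
      Matrix.one_apply, Fin.isValue] <;>
    norm_num [Fin.ext_iff]
  · linear_combination hg
  · linear_combination gam v * v 0 * hks
  · linear_combination gam v * v 1 * hks
  · linear_combination gam v * v 2 * hks
  · linear_combination (-(gam v * v 0)) * hks
  · linear_combination (gam v ^ 2 / (1 + gam v) * (v 0 * v 0)) * hks + (v 0 * v 0) * hk1
  · linear_combination (gam v ^ 2 / (1 + gam v) * (v 0 * v 1)) * hks + (v 0 * v 1) * hk1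
  · linear_combination (gam v ^ 2 / (1 + gam v) * (v 0 * v 2)) * hks + (v 0 * v 2) * hk1
  · linear_combination (-(gam v * v 1)) * hks
  · linear_combination (gam v ^ 2 / (1 + gam v) * (v 1 * v 0)) * hks + (v 1 * v 0) * hk1
  · linear_combination (gam v ^ 2 / (1 + gam v) * (v 1 * v 1)) * hks + (v 1 * v 1) * hk1
  · linear_combination (gam v ^ 2 / (1 + gam v) * (v 1 * v 2)) * hks + (v 1 * v 2) * hk1
  · linear_combination (-(gam v * v 2)) * hks
  · linear_combination (gam v ^ 2 / (1 + gam v) * (v 2 * v 0)) * hks + (v 2 * v 0) * hk1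
  · linear_combination (gam v ^ 2 / (1 + gam v) * (v 2 * v 1)) * hks + (v 2 * v 1) * hk1
  · linear_combination (gam v ^ 2 / (1 + gam v) * (v 2 * v 2)) * hks + (v 2 * v 2) * hk1

lemma smat_neg_mul_smat {v : Fin 3 → ℝ} (h : sq3 v < 1) :
    Smat (fun i => -v i) * Smat v = 1 := by
  have h' : sq3 (fun i => -v i) < 1 := by rw [sq3_neg]; exact h
  have := smat_mul_smat_neg h'
  rwa [show (fun i => -(fun j => -v j) i) = v from funext fun i => neg_neg _] at this

lemma det_fin_four_explicit (M : Matrix (Fin 4) (Fin 4) ℝ) :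
    M.det = M 0 0 * (M 1 1 * (M 2 2 * M 3 3 - M 2 3 * M 3 2) - M 1 2 * (M 2 1 * M 3 3 - M 2 3 * M 3 1) + M 1 3 * (M 2 1 * M 3 2 - M 2 2 * M 3 1)) -
      M 0 1 * (M 1 0 * (M 2 2 * M 3 3 - M 2 3 * M 3 2) - M 1 2 * (M 2 0 * M 3 3 - M 2 3 * M 3 0) + M 1 3 * (M 2 0 * M 3 2 - M 2 2 * M 3 0)) +
      M 0 2 * (M 1 0 * (M 2 1 * M 3 3 - M 2 3 * M 3 1) - M 1 1 * (M 2 0 * M 3 3 - M 2 3 * M 3 0) + M 1 3 * (M 2 0 * M 3 1 - M 2 1 * M 3 0)) -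
      M 0 3 * (M 1 0 * (M 2 1 * M 3 2 - M 2 2 * M 3 1) - M 1 1 * (M 2 0 * M 3 2 - M 2 2 * M 3 0) + M 1 2 * (M 2 0 * M 3 1 - M 2 1 * M 3 0)) := by
  rw [Matrix.det_succ_row_zero]
  simp [Fin.sum_univ_succ, Matrix.det_fin_three, Fin.succAbove,
    show (Fin.succ 2 : Fin 4) = 3 from rfl, show (Fin.castSucc 2 : Fin 4) = 2 from rfl,
    show ((1:Fin 4) < 3) from by decide]
  ring

lemma det_rmat (O : Matrix (Fin 3) (Fin 3) ℝ) : (Rmat O).det = O.det := by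
  rw [Rmat, blk4, Matrix.det_reindex_self, Matrix.det_fromBlocks_zero₂₁]
  simp

lemma det_smat {v : Fin 3 → ℝ} (h : sq3 v < 1) : (Smat v).det = 1 := by
  have hg := gam_sq h; have hks := gam_ks h
  unfold sq3 at hg hks
  rw [det_fin_four_explicit, smat_apply]
  simp only [Matrix.of_apply, Matrix.cons_val', Matrix.cons_val_zero, Matrix.cons_val_one,
    Matrix.head_cons, Matrix.empty_val', Matrix.cons_val_fin_one, Matrix.head_fin_const,
    Matrix.cons_val_two, Matrix.tail_cons, Matrix.cons_val_three]
  linear_combination gam v * hks + hg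

lemma sqrt_lt_one_of {s : ℝ} (h0 : 0 ≤ s) (h : s < 1) : Real.sqrt s < 1 := by
  nlinarith [Real.sq_sqrt h0, Real.sqrt_nonneg s]

lemma lt_one_of_sqrt {s : ℝ} (h0 : 0 ≤ s) (h : Real.sqrt s < 1) : s < 1 := by
  nlinarith [Real.sq_sqrt h0, Real.sqrt_nonneg s]

set_option maxHeartbeats 2000000

/-- Any proper orthochronous Lorentz transformation factors uniquely as S(v)·R(O)
with |v| < 1 and O ∈ SO(3,ℝ). -/
theorem proper_orthochronous_lorentz_decomposition (A : Matrix (Fin 4) (Fin 4) ℝ)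
    (hA : IsLorentz A) (hp : IsProper A) (ho : IsOrthochronous A) :
    ∃! p : (Fin 3 → ℝ) × Matrix (Fin 3) (Fin 3) ℝ,
      Real.sqrt (sq3 p.1) < 1 ∧ SO3 p.2 ∧ A = Smat p.1 * Rmat p.2 := by
  -- positivity of A 0 0
  have hsign := ho (Pi.single 0 1) (by simp [Pi.single_apply])
  rw [Matrix.mulVec_single_one] at hsign
  simp only [Matrix.col_apply, Pi.single_eq_same, mul_one, Real.sign_one] at hsign
  have hpos : 0 < A 0 0 := by
    rcases lt_trichotomy (A 0 0) 0 with h'|h'|h'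
    · rw [Real.sign_of_neg h'] at hsign; norm_num at hsign
    · rw [h', Real.sign_zero] at hsign; norm_num at hsign
    · exact h'
  have hγne : A 0 0 ≠ 0 := ne_of_gt hpos
  have hc00 := col_rel hA 0 0
  norm_num at hc00
  -- the velocity vector
  set v : Fin 3 → ℝ := ![A 1 0 / A 0 0, A 2 0 / A 0 0, A 3 0 / A 0 0] with hvdef
  have hγv0 : A 0 0 * v 0 = A 1 0 := by
    show A 0 0 * (A 1 0 / A 0 0) = A 1 0; field_simp
  have hγv1 : A 0 0 * v 1 = A 2 0 := by
    show A 0 0 * (A 2 0 / A 0 0) = A 2 0; field_simp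
  have hγv2 : A 0 0 * v 2 = A 3 0 := by
    show A 0 0 * (A 3 0 / A 0 0) = A 3 0; field_simp
  have hs : sq3 v = (A 0 0 ^ 2 - 1) / A 0 0 ^ 2 := by
    unfold sq3
    rw [eq_div_iff (by positivity : (A 0 0:ℝ)^2 ≠ 0)]
    linear_combination hc00 + (A 0 0 * v 0 + A 1 0) * hγv0 + (A 0 0 * v 1 + A 2 0) * hγv1
      + (A 0 0 * v 2 + A 3 0) * hγv2
  have hslt : sq3 v < 1 := by
    rw [hs, div_lt_one (by positivity)]
    nlinarith [hpos]
  have hgv : gam v = A 0 0 := by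
    unfold gam
    rw [hs, show 1 - (A 0 0 ^ 2 - 1) / A 0 0 ^ 2 = (1 / A 0 0)^2 by field_simp; ring,
      Real.sqrt_sq (by positivity), one_div_one_div]
  -- facts about γ and k
  have hg := gam_sq hslt
  have hks := gam_ks hslt
  have hk1 := gam_k1 hslt
  rw [hgv] at hg hks hk1
  unfold sq3 at hg hks
  -- the matrix B = S(-v) * A and its rotation block
  set B : Matrix (Fin 4) (Fin 4) ℝ := Smat (fun i => -v i) * A with hBdef
  set O : Matrix (Fin 3) (Fin 3) ℝ := Matrix.of (fun i j => B i.succ j.succ) with hOdef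
  have hSneg : Smat (fun i => -v i) = Matrix.of
      ![![A 0 0, -(A 0 0 * v 0), -(A 0 0 * v 1), -(A 0 0 * v 2)],
        ![-(A 0 0 * v 0), 1 + A 0 0 ^ 2 / (1 + A 0 0) * (v 0 * v 0), A 0 0 ^ 2 / (1 + A 0 0) * (v 0 * v 1), A 0 0 ^ 2 / (1 + A 0 0) * (v 0 * v 2)],
        ![-(A 0 0 * v 1), A 0 0 ^ 2 / (1 + A 0 0) * (v 1 * v 0), 1 + A 0 0 ^ 2 / (1 + A 0 0) * (v 1 * v 1), A 0 0 ^ 2 / (1 + A 0 0) * (v 1 * v 2)],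
        ![-(A 0 0 * v 2), A 0 0 ^ 2 / (1 + A 0 0) * (v 2 * v 0), A 0 0 ^ 2 / (1 + A 0 0) * (v 2 * v 1), 1 + A 0 0 ^ 2 / (1 + A 0 0) * (v 2 * v 2)]] := by
    rw [smat_apply (fun i => -v i), gam_neg, hgv]
    ext i j
    fin_cases i <;> fin_cases j <;> simp <;> ring
  -- column 0 of B
  have hB00 : B 0 0 = 1 := by
    rw [hBdef, Matrix.mul_apply, Fin.sum_univ_four, hSneg]
    simp only [Matrix.of_apply, Matrix.cons_val', Matrix.cons_val_zero, Matrix.cons_val_one,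
      Matrix.head_cons, Matrix.empty_val', Matrix.cons_val_fin_one, Matrix.head_fin_const,
      Matrix.cons_val_two, Matrix.tail_cons, Matrix.cons_val_three]
    rw [← hγv0, ← hγv1, ← hγv2]
    linear_combination hg
  have hB10 : B 1 0 = 0 := by
    rw [hBdef, Matrix.mul_apply, Fin.sum_univ_four, hSneg]
    simp only [Matrix.of_apply, Matrix.cons_val', Matrix.cons_val_zero, Matrix.cons_val_one,
      Matrix.head_cons, Matrix.empty_val', Matrix.cons_val_fin_one, Matrix.head_fin_const,
      Matrix.cons_val_two, Matrix.tail_cons, Matrix.cons_val_three]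
    rw [← hγv0, ← hγv1, ← hγv2]
    linear_combination (A 0 0 * v 0) * hks
  have hB20 : B 2 0 = 0 := by
    rw [hBdef, Matrix.mul_apply, Fin.sum_univ_four, hSneg]
    simp only [Matrix.of_apply, Matrix.cons_val', Matrix.cons_val_zero, Matrix.cons_val_one,
      Matrix.head_cons, Matrix.empty_val', Matrix.cons_val_fin_one, Matrix.head_fin_const,
      Matrix.cons_val_two, Matrix.tail_cons, Matrix.cons_val_three]
    rw [← hγv0, ← hγv1, ← hγv2]
    linear_combination (A 0 0 * v 1) * hks
  have hB30 : B 3 0 = 0 := by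
    rw [hBdef, Matrix.mul_apply, Fin.sum_univ_four, hSneg]
    simp only [Matrix.of_apply, Matrix.cons_val', Matrix.cons_val_zero, Matrix.cons_val_one,
      Matrix.head_cons, Matrix.empty_val', Matrix.cons_val_fin_one, Matrix.head_fin_const,
      Matrix.cons_val_two, Matrix.tail_cons, Matrix.cons_val_three]
    rw [← hγv0, ← hγv1, ← hγv2]
    linear_combination (A 0 0 * v 2) * hks
  -- B is Lorentz
  have hnegs : sq3 (fun i => -v i) < 1 := by rw [sq3_neg]; exact hslt
  have hLB : IsLorentz B := by
    intro x
    rw [hBdef, ← Matrix.mulVec_mulVec, smat_isLorentz hnegs, hA]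
  -- row 0 of B vanishes (besides the corner)
  have hB01 : B 0 1 = 0 := by
    have h := col_rel hLB 0 1
    simp only [hB10, hB20, hB30, hB00] at h
    simp at h
    linarith [h]
  have hB02 : B 0 2 = 0 := by
    have h := col_rel hLB 0 2
    simp only [hB10, hB20, hB30, hB00] at h
    simp at h
    linarith [h]
  have hB03 : B 0 3 = 0 := by
    have h := col_rel hLB 0 3
    simp only [hB10, hB20, hB30, hB00] at h
    simp at h
    linarith [h]
  -- B = Rmat O
  have hBR : B = Rmat O := by
    rw [rmat_apply]
    ext i j
    fin_cases i <;> fin_cases j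
    · exact hB00
    · exact hB01
    · exact hB02
    · exact hB03
    · exact hB10
    · rfl
    · rfl
    · rfl
    · exact hB20
    · rfl
    · rfl
    · rfl
    · exact hB30
    · rfl
    · rfl
    · rfl
  -- the factorization
  have hmain : A = Smat v * Rmat O := by
    calc A = (Smat v * Smat (fun i => -v i)) * A := by
            rw [smat_mul_smat_neg hslt, Matrix.one_mul]
      _ = Smat v * B := by rw [Matrix.mul_assoc, ← hBdef]
      _ = Smat v * Rmat O := by rw [hBR]
  -- O is orthogonal
  have hLR : IsLorentz (Rmat O) := hBR ▸ hLB
  have hOO : O.transpose * O = 1 := by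
    have h11 := col_rel hLR 1 1
    have h12 := col_rel hLR 1 2
    have h13 := col_rel hLR 1 3
    have h22 := col_rel hLR 2 2
    have h23 := col_rel hLR 2 3
    have h33 := col_rel hLR 3 3
    rw [rmat_apply] at h11 h12 h13 h22 h23 h33
    norm_num at h11 h12 h13 h22 h23 h33
    simp at h11 h12 h13 h22 h23 h33
    ring_nf at h11 h12 h13 h22 h23 h33
    ext i j
    fin_cases i <;> fin_cases j <;>
      simp [Matrix.mul_apply, Fin.sum_univ_three, Matrix.transpose_apply, Matrix.one_apply,
        Fin.ext_iff] <;>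
      ring_nf <;>
      linarith [h11, h12, h13, h22, h23, h33]
  -- O has determinant one
  have hdetO : O.det = 1 := by
    have hdA : A.det = O.det := by
      rw [hmain, Matrix.det_mul, det_smat hslt, det_rmat, one_mul]
    have hsq : O.det * O.det = 1 := by
      have := congrArg Matrix.det hOO
      rwa [Matrix.det_mul, Matrix.det_transpose, Matrix.det_one] at this
    have : 0 < O.det := hdA ▸ hp
    nlinarith
  -- assemble
  refine ⟨⟨v, O⟩, ⟨sqrt_lt_one_of (sq3_nonneg v) hslt, ⟨hOO, hdetO⟩, hmain⟩, ?_⟩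
  rintro ⟨w, Q⟩ ⟨hw1, hQ, hAQ⟩
  dsimp only at hw1 hQ hAQ
  have hws : sq3 w < 1 := lt_one_of_sqrt (sq3_nonneg w) hw1
  have hgw : 0 < gam w := gam_pos hws
  -- first column comparison
  have hcol : ∀ k : Fin 4, (Smat w * Rmat Q) k 0 = Smat w k 0 := by
    intro k
    have e0 : Rmat Q 0 0 = 1 := by rw [rmat_apply]; rfl
    have e1 : Rmat Q 1 0 = 0 := by rw [rmat_apply]; rfl
    have e2 : Rmat Q 2 0 = 0 := by rw [rmat_apply]; rfl
    have e3 : Rmat Q 3 0 = 0 := by rw [rmat_apply]; rfl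
    rw [Matrix.mul_apply, Fin.sum_univ_four, e0, e1, e2, e3]
    ring
  have hA00 : A 0 0 = gam w := by
    rw [hAQ, hcol 0, smat_apply]; rfl
  have hA10 : A 1 0 = gam w * w 0 := by
    rw [hAQ, hcol 1, smat_apply]; rfl
  have hA20 : A 2 0 = gam w * w 1 := by
    rw [hAQ, hcol 2, smat_apply]; rfl
  have hA30 : A 3 0 = gam w * w 2 := by
    rw [hAQ, hcol 3, smat_apply]; rfl
  have hwv : w = v := by
    funext i
    fin_cases i
    · show w 0 = A 1 0 / A 0 0
      rw [hA10, hA00]; field_simp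
    · show w 1 = A 2 0 / A 0 0
      rw [hA20, hA00]; field_simp
    · show w 2 = A 3 0 / A 0 0
      rw [hA30, hA00]; field_simp
  subst hwv
  have hRQ : Rmat Q = Rmat O := by
    have h1 : Smat (fun i => -v i) * (Smat v * Rmat Q) = Smat (fun i => -v i) * (Smat v * Rmat O) := by
      rw [← hAQ, ← hmain]
    rwa [← Matrix.mul_assoc, ← Matrix.mul_assoc, smat_neg_mul_smat hslt, Matrix.one_mul,
      Matrix.one_mul] at h1
  have hQO : Q = O := rmat_injective hRQ
  rw [hQO]
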